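/- Let $S = K[x_1,\ldots,x_n]$ and let $I \subset S$ be a lexsegment ideal with $I_j \ne 0$, and choose the lex-smallest monomial $u = x_{\alpha(1)}\cdots x_{\alpha(j)} \in I_j$ (with $\alpha(1) \le \cdots \le \alpha(j)$). Then $H(S/I, j) = \sum_{i=1}^{j} \binom{k(i)}{i}$ where $k(i) = n - \alpha(j+1-i) + i - 1$, and since $k(j) > k(j-1) > \cdots > k(1) \ge 0$, these are the $j$-th Macaulay coefficients of $H(S/I,j)$. -/

import Mathlib

open MvPolynomial

variable {K : Type*} [Field K] {n : ℕ}

/-- The total degree of an exponent vector. -/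
def mdeg {n : ℕ} (m : Fin n →₀ ℕ) : ℕ := m.sum fun _ e => e

/-- `I` is a monomial ideal: it contains every monomial of each of its elements. -/
def IsMonomialIdeal (I : Ideal (MvPolynomial (Fin n) K)) : Prop :=
  ∀ f ∈ I, ∀ m ∈ f.support, (monomial m (1 : K)) ∈ I

/-- `I` is stable: for every monomial `u ∈ I` with largest dividing variable `x_k`,
and every `i ≤ k`, the monomial `(x_i / x_k) * u` lies in `I`. -/
def IsStableIdeal (I : Ideal (MvPolynomial (Fin n) K)) : Prop :=
  ∀ m : Fin n →₀ ℕ, (monomial m (1 : K)) ∈ I →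
    ∀ k i : Fin n, m k ≠ 0 → (∀ k', k < k' → m k' = 0) → i ≤ k →
      (monomial (m + Finsupp.single i 1 - Finsupp.single k 1) (1 : K)) ∈ I

/-- `I` is strongly stable: for every monomial `u ∈ I`, every variable `x_k` dividing `u`
and every `i ≤ k`, the monomial `(x_i / x_k) * u` lies in `I`. -/
def IsStronglyStableIdeal (I : Ideal (MvPolynomial (Fin n) K)) : Prop :=
  ∀ m : Fin n →₀ ℕ, (monomial m (1 : K)) ∈ I →
    ∀ k i : Fin n, m k ≠ 0 → i ≤ k →
      (monomial (m + Finsupp.single i 1 - Finsupp.single k 1) (1 : K)) ∈ I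

/-- `v <_lex u` for exponent vectors, lex order with `x_1 > x_2 > ⋯ > x_n`. -/
def lexLt {n : ℕ} (v u : Fin n →₀ ℕ) : Prop :=
  ∃ i : Fin n, (∀ j < i, v j = u j) ∧ v i < u i

/-- `I` is a lexsegment ideal. -/
def IsLexsegmentIdeal (I : Ideal (MvPolynomial (Fin n) K)) : Prop :=
  IsMonomialIdeal I ∧
    ∀ u v : Fin n →₀ ℕ, (monomial u (1 : K)) ∈ I → mdeg v = mdeg u → lexLt u v →
      (monomial v (1 : K)) ∈ I

/-- The degree `j` piece of `S/I`, as the image of the degree `j` homogeneous polynomials. -/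
noncomputable def Qpiece (I : Ideal (MvPolynomial (Fin n) K)) (j : ℕ) :
    Submodule K (MvPolynomial (Fin n) K ⧸ I) :=
  (homogeneousSubmodule (Fin n) K j).map (Ideal.Quotient.mkₐ K I).toLinearMap

/-- Multiplication by `g` maps `(S/I)_j` injectively (to `(S/I)_{j'}`). -/
def QInj (I : Ideal (MvPolynomial (Fin n) K)) (g : MvPolynomial (Fin n) K)
    (j _j' : ℕ) : Prop :=
  ∀ f₁ ∈ Qpiece I j, ∀ f₂ ∈ Qpiece I j,
    Ideal.Quotient.mk I g * f₁ = Ideal.Quotient.mk I g * f₂ → f₁ = f₂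

/-- Multiplication by `g` maps `(S/I)_j` onto `(S/I)_{j'}`. -/
def QSurj (I : Ideal (MvPolynomial (Fin n) K)) (g : MvPolynomial (Fin n) K)
    (j j' : ℕ) : Prop :=
  ∀ h ∈ Qpiece I j', ∃ f ∈ Qpiece I j, Ideal.Quotient.mk I g * f = h

/-- Multiplication by `g` from `(S/I)_j` to `(S/I)_{j'}` has maximal rank. -/
def MulMaxRank (I : Ideal (MvPolynomial (Fin n) K)) (g : MvPolynomial (Fin n) K)
    (j j' : ℕ) : Prop :=
  QInj I g j j' ∨ QSurj I g j j'

section AuxCombinatorics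
open Finset
lemma mdeg_add {n : ℕ} (a b : Fin n →₀ ℕ) : mdeg (a + b) = mdeg a + mdeg b :=
  Finsupp.sum_add_index (by simp) (by simp)
lemma mdeg_single {n : ℕ} (p : Fin n) (c : ℕ) : mdeg (Finsupp.single p c) = c :=
  Finsupp.sum_single_index rfl
lemma mdeg_toFinsupp {n : ℕ} [DecidableEq (Fin n)] (m : Multiset (Fin n)) :
    mdeg m.toFinsupp = Multiset.card m := Multiset.toFinsupp_sum_eq m


-- initial segment lemma
lemma mem_iff_lt_card_of_downclosed {j : ℕ} (t : Finset (Fin j))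
    (ht : ∀ a ∈ t, ∀ b ≤ a, b ∈ t) (s : Fin j) : s ∈ t ↔ s.val < t.card := by
  constructor
  · intro hs
    have h1 : Finset.Iic s ⊆ t := fun b hb => ht s hs b (Finset.mem_Iic.1 hb)
    have := Finset.card_le_card h1
    rwa [Fin.card_Iic, Nat.succ_le_iff] at this
  · intro hs
    by_contra hst
    have h2 : t ⊆ Finset.Iio s := by
      intro a ha
      rw [Finset.mem_Iio]
      by_contra has
      exact hst (ht a ha s (not_lt.1 has))
    have := Finset.card_le_card h2
    rw [Fin.card_Iio] at this
    omega

section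
variable {n j : ℕ} (α : Fin j → Fin n)



noncomputable def expv : Fin n →₀ ℕ := ∑ i : Fin j, Finsupp.single (α i) 1

def Sp (p : Fin n) : ℕ := (univ.filter fun s => α s < p).card

lemma expv_apply (q : Fin n) : expv α q = (univ.filter fun s => α s = q).card := by
  classical
  rw [expv, Finset.sum_apply', Finset.card_filter]
  congr 1; ext i
  rw [Finsupp.single_apply]

lemma mdeg_sum_single {s : Finset (Fin j)} : mdeg (∑ i ∈ s, Finsupp.single (α i) 1) = s.card := by
  classical
  induction s using Finset.induction with
  | empty => simp [mdeg]
  | @insert a s ha ih =>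
    rw [Finset.sum_insert ha, mdeg_add, mdeg_single, ih, Finset.card_insert_of_notMem ha]
    omega

lemma mdeg_expv : mdeg (expv α) = j := by
  rw [expv, mdeg_sum_single, Finset.card_univ, Fintype.card_fin]

lemma filter_sum_single (P : Fin n → Prop) [DecidablePred P] (s : Finset (Fin j)) :
    Finsupp.filter P (∑ i ∈ s, Finsupp.single (α i) 1)
      = ∑ i ∈ s.filter (fun i => P (α i)), Finsupp.single (α i) 1 := by
  classical
  induction s using Finset.induction with
  | empty => ext q; simp [Finsupp.filter_apply]
  | @insert a s ha ih =>
    rw [Finset.sum_insert ha, Finsupp.filter_add, ih, Finset.filter_insert]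
    by_cases h : P (α a)
    · rw [if_pos h, Finsupp.filter_single_of_pos _ h,
        Finset.sum_insert (fun hc => ha (Finset.mem_of_mem_filter a hc))]
    · rw [if_neg h, Finsupp.filter_single_of_neg _ h, zero_add]

lemma mdeg_filter_lt (p : Fin n) :
    mdeg (Finsupp.filter (· < p) (expv α)) = Sp α p := by
  classical
  rw [expv, Sp, filter_sum_single, mdeg_sum_single]

lemma Sp_add_expv (p : Fin n) :
    Sp α p + expv α p = (univ.filter fun s => α s ≤ p).card := by
  classical
  rw [Sp, expv_apply, ← Finset.card_union_of_disjoint (by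
    simp only [Finset.disjoint_filter]
    intro x _ h h'
    exact absurd h' (ne_of_lt h))]
  congr 1
  ext s
  simp only [Finset.mem_union, Finset.mem_filter, Finset.mem_univ, true_and]
  exact ⟨fun h => h.elim le_of_lt le_of_eq, fun h => lt_or_eq_of_le h⟩

lemma Sp_add_le (p : Fin n) : Sp α p + expv α p ≤ j := by
  rw [Sp_add_expv]
  calc (univ.filter fun s => α s ≤ p).card ≤ (univ : Finset (Fin j)).card := Finset.card_filter_le _ _
  _ = j := by rw [Finset.card_univ, Fintype.card_fin]

lemma alpha_eq_iff (hα : Monotone α) (r : Fin j) (p : Fin n) :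
    α r = p ↔ Sp α p ≤ r.val ∧ r.val < Sp α p + expv α p := by
  classical
  have hlt : ∀ s : Fin j, (s ∈ univ.filter fun s => α s < p) ↔ s.val < Sp α p := by
    intro s
    exact mem_iff_lt_card_of_downclosed _ (by
      intro a ha b hb
      simp only [Finset.mem_filter, Finset.mem_univ, true_and] at *
      exact lt_of_le_of_lt (hα hb) ha) s
  have hle : ∀ s : Fin j, (s ∈ univ.filter fun s => α s ≤ p) ↔ s.val < Sp α p + expv α p := by
    intro s
    rw [Sp_add_expv]
    exact mem_iff_lt_card_of_downclosed _ (by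
      intro a ha b hb
      simp only [Finset.mem_filter, Finset.mem_univ, true_and] at *
      exact le_trans (hα hb) ha) s
  have h1 := hlt r
  have h2 := hle r
  simp only [Finset.mem_filter, Finset.mem_univ, true_and] at h1 h2
  constructor
  · intro h
    exact ⟨not_lt.1 (fun hc => absurd (h1.2 hc) (by rw [h]; exact lt_irrefl p)),
      h2.1 (le_of_eq h)⟩
  · intro ⟨ha, hb⟩
    exact le_antisymm (h2.2 hb) (not_lt.1 (fun hc => absurd (h1.1 hc) (by omega)))
end


section
variable {n j : ℕ}

open scoped Classical in
/-- the finset of all degree-`j` exponent vectors -/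
noncomputable def Tdeg (n j : ℕ) : Finset (Fin n →₀ ℕ) :=
  Finset.image (fun s : Sym (Fin n) j => Multiset.toFinsupp (s : Multiset (Fin n))) Finset.univ

lemma mem_Tdeg {v : Fin n →₀ ℕ} : v ∈ Tdeg n j ↔ mdeg v = j := by
  classical
  constructor
  · intro hv
    rw [Tdeg] at hv
    obtain ⟨s, -, rfl⟩ := Finset.mem_image.1 hv
    rw [mdeg_toFinsupp, Sym.card_coe]
  · intro hv
    rw [Tdeg, Finset.mem_image]
    refine ⟨⟨v.toMultiset, by rw [Finsupp.card_toMultiset]; exact hv⟩, Finset.mem_univ _, ?_⟩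
    simp

/-- counting monomials with fixed lower part -/
lemma card_piece (u : Fin n →₀ ℕ) (p : Fin n) (c d : ℕ)
    (hd : mdeg (Finsupp.filter (· < p) u + Finsupp.single p c) + d = j) :
    ((Tdeg n j).filter fun v => (∀ q < p, v q = u q) ∧ v p = c).card
      = Nat.multichoose (n - 1 - p.val) d := by
  classical
  set base : Fin n →₀ ℕ := Finsupp.filter (· < p) u + Finsupp.single p c with hbase
  have hbase_lt : ∀ q, q < p → base q = u q := by
    intro q hq
    simp [hbase, Finsupp.add_apply, Finsupp.filter_apply, hq, Finsupp.single_apply,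
      (ne_of_gt hq : p ≠ q)]
  have hbase_p : base p = c := by
    simp [hbase, Finsupp.add_apply, Finsupp.filter_apply, Finsupp.single_apply]
  have hbase_gt : ∀ q, p < q → base q = 0 := by
    intro q hq
    simp [hbase, Finsupp.add_apply, Finsupp.filter_apply, not_lt_of_gt hq,
      (ne_of_lt hq : p ≠ q)]
  rw [show ((Tdeg n j).filter fun v => (∀ q < p, v q = u q) ∧ v p = c).card
      = Fintype.card (Sym {q : Fin n // p < q} d) from ?_ ]
  · rw [Sym.card_sym_eq_multichoose]
    congr 1
    rw [Fintype.card_subtype]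
    have : (univ.filter fun q : Fin n => p < q) = Finset.Ioi p := by
      ext q; simp
    rw [this, Fin.card_Ioi]
  · refine (Finset.card_bij
      (fun (s : Sym {q : Fin n // p < q} d) _ =>
        base + (Multiset.map Subtype.val (s : Multiset {q : Fin n // p < q})).toFinsupp)
      ?_ ?_ ?_).symm
    · -- membership
      intro s _
      have hcount : ∀ q : Fin n, ¬ p < q →
          (Multiset.map Subtype.val (s : Multiset {q : Fin n // p < q})).count q = 0 := by
        intro q hq
        rw [Multiset.count_eq_zero]
        intro hmem
        obtain ⟨a, -, rfl⟩ := Multiset.mem_map.1 hmem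
        exact hq a.2
      rw [Finset.mem_filter]
      refine ⟨mem_Tdeg.2 ?_, ?_, ?_⟩
      · rw [mdeg_add, mdeg_toFinsupp, Multiset.card_map, Sym.card_coe, hd]
      · intro q hq
        rw [Finsupp.add_apply, Multiset.toFinsupp_apply, hcount q (asymm hq), add_zero,
          hbase_lt q hq]
      · rw [Finsupp.add_apply, Multiset.toFinsupp_apply, hcount p (lt_irrefl p), add_zero,
          hbase_p]
    · -- injectivity
      intro s₁ _ s₂ _ heq
      have := add_left_cancel heq
      have := Multiset.toFinsupp.injective this
      have := Multiset.map_injective Subtype.val_injective this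
      exact Sym.coe_injective this
    · -- surjectivity
      intro v hv
      rw [Finset.mem_filter] at hv
      obtain ⟨hvT, hvlt, hvp⟩ := hv
      have hvdeg := mem_Tdeg.1 hvT
      set w : Fin n →₀ ℕ := v - base with hw
      have hwle : ∀ q, ¬ p < q → w q = 0 := by
        intro q hq
        rcases lt_trichotomy q p with h | h | h
        · rw [hw, Finsupp.tsub_apply, hbase_lt q h, hvlt q h, Nat.sub_self]
        · subst h; rw [hw, Finsupp.tsub_apply, hbase_p, hvp, Nat.sub_self]
        · exact absurd h hq
      have hble : base ≤ v := by
        rw [Finsupp.le_def]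
        intro q
        rcases lt_trichotomy q p with h | h | h
        · rw [hbase_lt q h, hvlt q h]
        · subst h; rw [hbase_p, hvp]
        · rw [hbase_gt q h]; exact Nat.zero_le _
      have hsplit : base + w = v := add_tsub_cancel_of_le hble
      have hwdeg : mdeg w = d := by
        have := mdeg_add base w
        rw [hsplit] at this
        omega
      have hsupp : ∀ x ∈ w.support, p < x := by
        intro x hx
        by_contra hc
        exact (Finsupp.mem_support_iff.1 hx) (hwle x hc)
      refine ⟨⟨(w.subtypeDomain (p < ·)).toMultiset, ?_⟩, Finset.mem_univ _, ?_⟩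
      · rw [Finsupp.card_toMultiset]
        have h1 : (w.subtypeDomain (p < ·)).sum (fun _ e => e) = w.sum (fun _ e => e) :=
          Finsupp.sum_subtypeDomain_index (h := fun _ e => e) hsupp
        exact h1.trans hwdeg
      · -- φ s = v
        show base + (Multiset.map Subtype.val
            (Finsupp.toMultiset (w.subtypeDomain (p < ·)))).toFinsupp = v
        rw [← hsplit]
        congr 1
        ext q
        rw [Multiset.toFinsupp_apply]
        by_cases hq : p < q
        · rw [show q = Subtype.val (⟨q, hq⟩ : {q : Fin n // p < q}) from rfl,
            Multiset.count_map_eq_count' _ _ Subtype.val_injective,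
            Finsupp.count_toMultiset, Finsupp.subtypeDomain_apply]
        · rw [hwle q hq, Multiset.count_eq_zero]
          intro hmem
          obtain ⟨a, -, rfl⟩ := Multiset.mem_map.1 hmem
          exact hq a.2
end

section partitionlemma
variable {n j : ℕ} {α : Fin j → Fin n}

open scoped Classical in
lemma card_lt_expv (hα : Monotone α) :
    ((Tdeg n j).filter fun v => lexLt v (expv α)).card
      = ∑ i : Fin j, Nat.choose (n - 1 - (α (Fin.rev i)).val + i.val) (i.val + 1) := by
  classical
  have hK : ∀ i : Fin j, Sp α (α (Fin.rev i)) ≤ (Fin.rev i).val ∧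
      (Fin.rev i).val < Sp α (α (Fin.rev i)) + expv α (α (Fin.rev i)) :=
    fun i => (alpha_eq_iff α hα (Fin.rev i) (α (Fin.rev i))).1 rfl
  set cI : Fin j → ℕ := fun i => (Fin.rev i).val - Sp α (α (Fin.rev i)) with hcI
  have hcidef : ∀ i : Fin j, cI i = (Fin.rev i).val - Sp α (α (Fin.rev i)) := fun i => rfl
  have hcIlt : ∀ i, cI i < expv α (α (Fin.rev i)) := fun i => by
    have h1 := hK i; have h2 := hcidef i; omega
  have filter_eq : (Tdeg n j).filter (fun v => lexLt v (expv α))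
      = Finset.biUnion univ (fun i : Fin j => (Tdeg n j).filter
          (fun v => (∀ q < α (Fin.rev i), v q = expv α q) ∧ v (α (Fin.rev i)) = cI i)) := by
    ext v
    simp only [Finset.mem_filter, Finset.mem_biUnion, Finset.mem_univ, true_and]
    constructor
    · rintro ⟨hvT, p₀, hpre, hlt⟩
      have hr : Sp α p₀ + v p₀ < j := by
        have := Sp_add_le α p₀; omega
      have hval : ((⟨Sp α p₀ + v p₀, hr⟩ : Fin j) : ℕ) = Sp α p₀ + v p₀ := rfl
      refine ⟨Fin.rev ⟨Sp α p₀ + v p₀, hr⟩, hvT, ?_⟩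
      have hrev : Fin.rev (Fin.rev (⟨Sp α p₀ + v p₀, hr⟩ : Fin j)) = ⟨Sp α p₀ + v p₀, hr⟩ :=
        Fin.rev_rev _
      have hp : α (Fin.rev (Fin.rev (⟨Sp α p₀ + v p₀, hr⟩ : Fin j))) = p₀ := by
        rw [hrev]
        exact (alpha_eq_iff α hα _ p₀).2 ⟨by omega, by omega⟩
      have hc : cI (Fin.rev ⟨Sp α p₀ + v p₀, hr⟩) = v p₀ := by
        rw [hcidef, hp, hrev]
        omega
      rw [hp, hc]
      exact ⟨hpre, rfl⟩
    · rintro ⟨i, hvT, hpre, hvp⟩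
      exact ⟨hvT, α (Fin.rev i), hpre, by rw [hvp]; exact hcIlt i⟩
  rw [filter_eq, Finset.card_biUnion]
  · refine Finset.sum_congr rfl (fun i _ => ?_)
    have hd : mdeg (Finsupp.filter (· < α (Fin.rev i)) (expv α)
        + Finsupp.single (α (Fin.rev i)) (cI i)) + (i.val + 1) = j := by
      rw [mdeg_add, mdeg_filter_lt, mdeg_single]
      have h1 := hK i
      have h2 : (Fin.rev i).val = j - (i.val + 1) := Fin.val_rev i
      have h3 : i.val < j := i.isLt
      have h4 := hcidef i
      omega
    rw [card_piece (expv α) (α (Fin.rev i)) (cI i) (i.val + 1) hd, Nat.multichoose_eq]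
    have : n - 1 - (α (Fin.rev i)).val + (i.val + 1) - 1
        = n - 1 - (α (Fin.rev i)).val + i.val := by omega
    rw [this]
  · intro i₁ _ i₂ _ hne
    rw [Function.onFun, Finset.disjoint_left]
    intro v hv₁ hv₂
    simp only [Finset.mem_filter] at hv₁ hv₂
    obtain ⟨hvT, hpre₁, hvp₁⟩ := hv₁
    obtain ⟨-, hpre₂, hvp₂⟩ := hv₂
    rcases lt_trichotomy (α (Fin.rev i₁)) (α (Fin.rev i₂)) with h | h | h
    · have := hpre₂ _ h
      have := hcIlt i₁
      omega
    · have hcc : cI i₁ = cI i₂ := by rw [← hvp₁, ← hvp₂, h]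
      have hSp : Sp α (α (Fin.rev i₁)) = Sp α (α (Fin.rev i₂)) := by rw [h]
      have h1 := hK i₁
      have h2 := hK i₂
      have h3 := hcidef i₁
      have h4 := hcidef i₂
      have : (Fin.rev i₁).val = (Fin.rev i₂).val := by omega
      exact hne (Fin.rev_injective (Fin.val_injective this))
    · have := hpre₁ _ h
      have := hcIlt i₂
      omega

end partitionlemma

end AuxCombinatorics

section AuxLA
open Finset
lemma lexLt_or_of_ne {n : ℕ} (v u : Fin n →₀ ℕ) (h : v ≠ u) : lexLt v u ∨ lexLt u v := by
  classical
  have hne : ∃ q, v q ≠ u q := by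
    by_contra hc
    push_neg at hc
    exact h (Finsupp.ext hc)
  set D : Finset (Fin n) := (v.support ∪ u.support).filter (fun q => v q ≠ u q) with hD
  have hDne : D.Nonempty := by
    obtain ⟨q, hq⟩ := hne
    refine ⟨q, Finset.mem_filter.2 ⟨?_, hq⟩⟩
    rw [Finset.mem_union, Finsupp.mem_support_iff, Finsupp.mem_support_iff]
    by_contra hc
    push_neg at hc
    exact hq (hc.1.trans hc.2.symm)
  set p := D.min' hDne with hp
  have hpD : p ∈ D := D.min'_mem hDne
  have hpair := Finset.mem_filter.1 hpD
  have hpre : ∀ q, q < p → v q = u q := by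
    intro q hq
    by_contra hc
    have hqD : q ∈ D := by
      refine Finset.mem_filter.2 ⟨?_, hc⟩
      rw [Finset.mem_union, Finsupp.mem_support_iff, Finsupp.mem_support_iff]
      by_contra hcc
      push_neg at hcc
      exact hc (hcc.1.trans hcc.2.symm)
    exact absurd (D.min'_le q hqD) (not_le.2 hq)
  rcases lt_or_gt_of_ne hpair.2 with hlt | hgt
  · exact Or.inl ⟨p, hpre, hlt⟩
  · exact Or.inr ⟨p, fun q hq => (hpre q hq).symm, hgt⟩

section LA2
variable {K : Type*} [Field K] {n : ℕ}

open scoped Classical in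
noncomputable def Bset (I : Ideal (MvPolynomial (Fin n) K)) (j : ℕ) : Finset (Fin n →₀ ℕ) :=
  (Tdeg n j).filter (fun m => monomial m (1:K) ∉ I)

lemma mem_Bset {I : Ideal (MvPolynomial (Fin n) K)} {j : ℕ} {m : Fin n →₀ ℕ} :
    m ∈ Bset I j ↔ mdeg m = j ∧ monomial m (1:K) ∉ I := by
  classical
  rw [Bset]
  simp only [Finset.mem_filter, mem_Tdeg]

lemma mdeg_eq_of_homog {j : ℕ} {f : MvPolynomial (Fin n) K} (hf : f.IsHomogeneous j)
    {m : Fin n →₀ ℕ} (hm : m ∈ f.support) : mdeg m = j := by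
  have := hf (MvPolynomial.mem_support_iff.1 hm)
  rw [mdeg, ← this]
  rw [Finsupp.weight_apply]
  simp [Finsupp.sum]

lemma qpiece_eq_span (I : Ideal (MvPolynomial (Fin n) K)) (hmono : IsMonomialIdeal I) (j : ℕ) :
    Qpiece I j = Submodule.span K
      ((fun m => Ideal.Quotient.mk I (monomial m (1:K))) '' (Bset I j : Set (Fin n →₀ ℕ))) := by
  classical
  apply le_antisymm
  · rintro x hx
    obtain ⟨f, hf, rfl⟩ := Submodule.mem_map.1 hx
    rw [mem_homogeneousSubmodule] at hf
    have hfs : (Ideal.Quotient.mkₐ K I).toLinearMap f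
        = ∑ m ∈ f.support, coeff m f • Ideal.Quotient.mk I (monomial m (1:K)) := by
      conv_lhs => rw [← MvPolynomial.support_sum_monomial_coeff f]
      rw [map_sum]
      refine Finset.sum_congr rfl (fun m _ => ?_)
      rw [show (monomial m (coeff m f)) = coeff m f • monomial m (1:K) by
        rw [MvPolynomial.smul_monomial, smul_eq_mul, mul_one]]
      simp only [map_smul]
      rfl
    rw [hfs]
    refine Submodule.sum_mem _ (fun m hm => ?_)
    by_cases hmI : monomial m (1:K) ∈ I
    · have : Ideal.Quotient.mk I (monomial m (1:K)) = 0 :=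
        (Ideal.Quotient.eq_zero_iff_mem).2 hmI
      rw [this, smul_zero]
      exact Submodule.zero_mem _
    · refine Submodule.smul_mem _ _ (Submodule.subset_span ?_)
      exact ⟨m, mem_Bset.2 ⟨mdeg_eq_of_homog hf hm, hmI⟩, rfl⟩
  · rw [Submodule.span_le]
    rintro x ⟨m, hm, rfl⟩
    refine ⟨monomial m (1:K), ?_, rfl⟩
    rw [SetLike.mem_coe, mem_homogeneousSubmodule]
    refine isHomogeneous_monomial _ ?_
    have := (mem_Bset.1 hm).1
    rw [← this, mdeg]
    simp [Finsupp.degree, Finsupp.sum]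
    rfl

lemma finrank_qpiece (I : Ideal (MvPolynomial (Fin n) K)) (hmono : IsMonomialIdeal I) (j : ℕ) :
    Module.finrank K (Qpiece I j) = (Bset I j).card := by
  classical
  have hli : LinearIndependent K
      (fun m : ↥(Bset I j) => Ideal.Quotient.mk I (monomial (m : Fin n →₀ ℕ) (1:K))) := by
    rw [linearIndependent_iff']
    intro s g hsum i hi
    by_contra hgi
    set f : MvPolynomial (Fin n) K :=
      ∑ m ∈ s, g m • monomial (m : Fin n →₀ ℕ) (1:K) with hf
    have hfI : f ∈ I := by
      rw [← Ideal.Quotient.eq_zero_iff_mem]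
      show ((Ideal.Quotient.mkₐ K I).toLinearMap) f = 0
      rw [hf, map_sum]
      simp_rw [map_smul]
      exact hsum
    have hcoeff : coeff (i : Fin n →₀ ℕ) f = g i := by
      rw [hf, MvPolynomial.coeff_sum]
      rw [Finset.sum_eq_single i]
      · rw [MvPolynomial.coeff_smul, MvPolynomial.coeff_monomial, if_pos rfl, smul_eq_mul, mul_one]
      · intro b _ hbi
        rw [MvPolynomial.coeff_smul, MvPolynomial.coeff_monomial, if_neg, smul_eq_mul, mul_zero]
        exact fun hc => hbi (Subtype.ext hc)
      · intro his
        exact absurd hi his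
    have hmem : (i : Fin n →₀ ℕ) ∈ f.support := by
      rw [MvPolynomial.mem_support_iff, hcoeff]
      exact hgi
    exact (mem_Bset.1 i.2).2 (hmono f hfI _ hmem)
  rw [qpiece_eq_span I hmono j, Set.image_eq_range]
  exact (finrank_span_eq_card hli).trans (Fintype.card_coe _)
end LA2

end AuxLA

/-- Let `I` be a lexsegment ideal, `j ≥ 1`, and let `u = x_{α(1)} ⋯ x_{α(j)}` (with
`α(1) ≤ ⋯ ≤ α(j)`) be the lex-smallest monomial of `I_j ≠ 0`. Then
`H(S/I, j) = ∑_{i=1}^j C(k(i), i)` where `k(i) = n - α(j+1-i) + i - 1`, and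
`k(j) > ⋯ > k(1) ≥ 0`, so these are the `j`-th Macaulay coefficients of `H(S/I,j)`.
(0-based encoding: `i : Fin j` encodes paper index `i+1`, `(α r).val = α(r+1) - 1`.) -/
theorem stmt_19 (hn : 1 ≤ n) (I : Ideal (MvPolynomial (Fin n) K))
    (hlex : IsLexsegmentIdeal I)
    (j : ℕ) (hj : 1 ≤ j)
    (α : Fin j → Fin n) (hα : Monotone α)
    (hu : monomial (∑ i : Fin j, Finsupp.single (α i) 1) (1 : K) ∈ I)
    (hmin : ∀ v : Fin n →₀ ℕ, mdeg v = j →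
        lexLt v (∑ i : Fin j, Finsupp.single (α i) 1) → monomial v (1 : K) ∉ I) :
    Module.finrank K (Qpiece I j) =
        (∑ i : Fin j, Nat.choose (n - 1 - (α (Fin.rev i)).val + i.val) (i.val + 1)) ∧
      StrictMono (fun i : Fin j => n - 1 - (α (Fin.rev i)).val + i.val) := by
  classical
  have hmono := hlex.1
  have hu' : monomial (expv α) (1 : K) ∈ I := hu
  constructor
  · rw [finrank_qpiece I hmono j]
    have hBeq : Bset I j = (Tdeg n j).filter (fun v => lexLt v (expv α)) := by
      ext v
      rw [mem_Bset]
      simp only [Finset.mem_filter, mem_Tdeg]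
      constructor
      · rintro ⟨hdeg, hnI⟩
        refine ⟨hdeg, ?_⟩
        by_contra hnlt
        rcases eq_or_ne v (expv α) with rfl | hne
        · exact hnI hu'
        · rcases lexLt_or_of_ne v (expv α) hne with h | h
          · exact hnlt h
          · exact hnI (hlex.2 (expv α) v hu' (by rw [mdeg_expv]; exact hdeg) h)
      · rintro ⟨hdeg, hlt⟩
        exact ⟨hdeg, hmin v hdeg hlt⟩
    rw [hBeq, card_lt_expv hα]
  · intro a b hab
    have hab' : a.val < b.val := hab
    have h1 : Fin.rev b ≤ Fin.rev a := by
      rw [Fin.rev_le_rev]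
      exact le_of_lt hab
    have h2 : (α (Fin.rev b)).val ≤ (α (Fin.rev a)).val := hα h1
    have h3 : n - 1 - (α (Fin.rev a)).val ≤ n - 1 - (α (Fin.rev b)).val :=
      Nat.sub_le_sub_left h2 _
    show n - 1 - (α (Fin.rev a)).val + a.val < n - 1 - (α (Fin.rev b)).val + b.val
    omega
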